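/- Let P ∈ ℂ[x] be a polynomial of degree d ≥ 1, let Q(x) := P(x+β) where β is chosen so that Q has vanishing coefficient in degree d-1, let δ be the leading coefficient of Q, and let ξ ∈ ℂ[t] be a polynomial of degree a ≥ 1 with nonzero constant term. Then the polynomial δ·ξ(t)^d − c·t^{da} (for any nonzero constant c such that it is not identically zero) has degree at least (d-1)a, and if its degree equals (d-1)a then ξ(t) = γt^a + γ' for constants γ, γ'. -/

import Mathlib

open Polynomial

lemma pow_sub_pow_eq_prod (u v : Polynomial ℂ) (hv : v ≠ 0) (d : ℕ) (hd : 0 < d) :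
    u ^ d - v ^ d = ((nthRoots d (1 : ℂ)).map (fun ζ => u - C ζ * v)).prod := by
  have hprim := Complex.isPrimitiveRoot_exp d hd.ne'
  have hcard : Multiset.card (nthRoots d (1 : ℂ)) = d := hprim.card_nthRoots_one
  have hmonic : (X ^ d - C (1 : ℂ)).Monic := monic_X_pow_sub_C _ hd.ne'
  have hfact : ((nthRoots d (1 : ℂ)).map (fun ζ => X - C ζ)).prod = X ^ d - 1 := by
    have h1 : (X ^ d - C (1 : ℂ)).roots = nthRoots d (1 : ℂ) := rfl
    have h2 := C_leadingCoeff_mul_prod_multiset_X_sub_C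
      (p := X ^ d - C (1 : ℂ)) (by rw [h1, hcard, natDegree_X_pow_sub_C])
    rw [h1, hmonic.leadingCoeff, C_1, one_mul] at h2
    exact h2
  set K := RatFunc ℂ
  set ι : Polynomial ℂ →+* K := (algebraMap (Polynomial ℂ) K : _) with hι
  have hinj : Function.Injective ι := IsFractionRing.injective (Polynomial ℂ) K
  have hvK : ι v ≠ 0 := fun h => hv (hinj (by simpa using h))
  apply hinj
  set w : K := ι u / ι v with hw
  have h3 := congrArg (Polynomial.aeval (R := ℂ) w) hfact
  rw [map_multiset_prod, Multiset.map_map, map_sub, map_pow, aeval_X, map_one] at h3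
  have h5 : (Multiset.map (fun ζ => ι u - algebraMap ℂ K ζ * ι v) (nthRoots d (1 : ℂ))).prod
      = (ι v) ^ d * (Multiset.map ((Polynomial.aeval w) ∘ fun ζ => X - C ζ)
        (nthRoots d (1 : ℂ))).prod := by
    have : ∀ ζ ∈ nthRoots d (1 : ℂ),
        ι u - algebraMap ℂ K ζ * ι v = ι v * ((Polynomial.aeval w) (X - C ζ)) := by
      intro ζ _
      simp only [map_sub, aeval_X, aeval_C, hw]
      rw [mul_sub, mul_div_cancel₀ (G₀ := RatFunc ℂ) _ hvK]
      ring
    rw [Multiset.map_congr rfl this, Multiset.prod_map_mul, Multiset.map_const',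
      Multiset.prod_replicate, hcard]
    rfl
  rw [h3] at h5
  have h6 : (ι v) ^ d * (w ^ d - 1) = ι u ^ d - ι v ^ d := by
    rw [hw, div_pow, mul_sub, mul_one, mul_div_cancel₀ (G₀ := RatFunc ℂ) _ (pow_ne_zero d hvK)]
  rw [h6] at h5
  rw [map_sub, map_pow, map_pow, map_multiset_prod, Multiset.map_map, ← h5]
  apply congrArg
  apply Multiset.map_congr rfl
  intro ζ _
  simp only [Function.comp_apply, map_sub, map_mul]
  rw [hι, IsScalarTower.algebraMap_apply ℂ (Polynomial ℂ) K, Polynomial.algebraMap_eq]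

open Polynomial in
theorem stmt14 (P : Polynomial ℂ) (d : ℕ) (hd : 1 ≤ d) (hP : P.natDegree = d)
    (β : ℂ) (Q : Polynomial ℂ) (hQ : Q = P.comp (X + C β))
    (hQcoeff : Q.coeff (d - 1) = 0)
    (δ : ℂ) (hδ : δ = Q.leadingCoeff)
    (ξ : Polynomial ℂ) (a : ℕ) (ha : 1 ≤ a) (hξ : ξ.natDegree = a)
    (hξ0 : ξ.coeff 0 ≠ 0)
    (c : ℂ) (hc : c ≠ 0)
    (hne : C δ * ξ ^ d - C c * X ^ (d * a) ≠ 0) :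
    (d - 1) * a ≤ (C δ * ξ ^ d - C c * X ^ (d * a)).natDegree ∧
    ((C δ * ξ ^ d - C c * X ^ (d * a)).natDegree = (d - 1) * a →
      ∃ γ γ' : ℂ, ξ = C γ * X ^ a + C γ') := by
  have hd0 : 0 < d := hd
  -- δ ≠ 0
  have hP0 : P ≠ 0 := fun h => by simp [h] at hP; omega
  have hQdeg : Q.natDegree = d := by
    rw [hQ, natDegree_comp, natDegree_X_add_C, mul_one, hP]
  have hQ0 : Q ≠ 0 := fun h => by rw [h, natDegree_zero] at hQdeg; omega
  have hδ0 : δ ≠ 0 := by rw [hδ]; exact leadingCoeff_ne_zero.mpr hQ0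
  obtain ⟨e, he⟩ := IsAlgClosed.exists_pow_nat_eq (c / δ) hd0
  have he0 : e ≠ 0 := by
    intro h
    rw [h, zero_pow hd0.ne'] at he
    exact hc (by field_simp at he; linear_combination -he)
  have hprim := Complex.isPrimitiveRoot_exp d hd0.ne'
  have hcard : Multiset.card (nthRoots d (1 : ℂ)) = d := hprim.card_nthRoots_one
  have hnodup : (nthRoots d (1 : ℂ)).Nodup := hprim.nthRoots_one_nodup
  set m := nthRoots d (1 : ℂ) with hm
  set g : ℂ → Polynomial ℂ := fun ζ => ξ - C (ζ * e) * X ^ a with hg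
  -- factorization
  have hδc : δ * (c / δ) = c := by field_simp
  have hFeq : C δ * ξ ^ d - C c * X ^ (d * a) = C δ * (m.map g).prod := by
    have h1 : ξ ^ d - (C e * X ^ a) ^ d = (m.map g).prod := by
      rw [pow_sub_pow_eq_prod ξ (C e * X ^ a)
        (mul_ne_zero (C_ne_zero.mpr he0) (pow_ne_zero _ X_ne_zero)) d hd0]
      apply congrArg
      apply Multiset.map_congr rfl
      intro ζ _
      rw [hg, ← mul_assoc, ← C_mul]
    rw [← h1, mul_sub]
    congr 1
    rw [mul_pow, ← C_pow, he, ← pow_mul, ← mul_assoc, ← C_mul, hδc, mul_comm a d]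
  -- each factor nonzero
  have hgne : ∀ ζ : ℂ, g ζ ≠ 0 := by
    intro ζ hz
    apply hξ0
    have : (g ζ).coeff 0 = ξ.coeff 0 := by
      simp only [hg, coeff_sub, coeff_C_mul, coeff_X_pow,
        if_neg (by omega : ¬ (0 = a)), mul_zero, sub_zero]
    rw [hz, coeff_zero] at this
    exact this.symm
  have hzero_notmem : (0 : Polynomial ℂ) ∉ m.map g := by
    intro h
    obtain ⟨ζ, _, hζ⟩ := Multiset.mem_map.mp h
    exact hgne ζ hζ
  have hdegle : ∀ ζ : ℂ, (g ζ).natDegree ≤ a := by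
    intro ζ
    refine (natDegree_sub_le _ _).trans ?_
    rw [hξ]
    simp only [max_le_iff, le_refl, true_and]
    exact (natDegree_C_mul_le _ _).trans (by rw [natDegree_X_pow])
  have hdeg_eq : ∀ ζ : ℂ, ξ.coeff a ≠ ζ * e → (g ζ).natDegree = a := by
    intro ζ hζ
    refine le_antisymm (hdegle ζ) (le_natDegree_of_ne_zero ?_)
    have hca : (g ζ).coeff a = ξ.coeff a - ζ * e := by
      simp only [hg, coeff_sub, coeff_C_mul, coeff_X_pow, if_pos rfl, eq_self_iff_true, if_true, mul_one]
    rw [hca, sub_ne_zero]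
    exact hζ
  -- natDegree of F
  have hFdeg : (C δ * ξ ^ d - C c * X ^ (d * a)).natDegree
      = (m.map fun ζ => (g ζ).natDegree).sum := by
    rw [hFeq, natDegree_C_mul hδ0, natDegree_multiset_prod _ hzero_notmem,
      Multiset.map_map]
    rfl
  have hsplit : d * a = (d - 1) * a + a := by
    nth_rewrite 1 [show d = (d - 1) + 1 by omega]
    ring
  by_cases hb : ∃ ζ ∈ m, ξ.coeff a = ζ * e
  · -- bad factor exists
    obtain ⟨ζ0, hζ0m, hζ0⟩ := hb
    have hcons : ζ0 ::ₘ m.erase ζ0 = m := Multiset.cons_erase hζ0m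
    have hcard' : Multiset.card (m.erase ζ0) = d - 1 := by
      rw [Multiset.card_erase_of_mem hζ0m, hcard]; rfl
    have herase : ((m.erase ζ0).map fun ζ => (g ζ).natDegree)
        = Multiset.replicate (d - 1) a := by
      apply Multiset.eq_replicate.mpr
      constructor
      · rw [Multiset.card_map, hcard']
      · intro b hb'
        obtain ⟨ζ, hζmem, rfl⟩ := Multiset.mem_map.mp hb'
        apply hdeg_eq
        intro hcontra
        have hζne : ζ ≠ ζ0 := by
          intro h
          rw [h] at hζmem
          exact (Multiset.Nodup.notMem_erase hnodup) hζmem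
        exact hζne (mul_right_cancel₀ he0 (hcontra.symm.trans hζ0))
    have hsum : (m.map fun ζ => (g ζ).natDegree).sum
        = (g ζ0).natDegree + (d - 1) * a := by
      rw [← hcons, Multiset.map_cons, Multiset.sum_cons, herase,
        Multiset.sum_replicate, smul_eq_mul]
    rw [hFdeg, hsum]
    constructor
    · omega
    · intro heq
      have hdeg0 : (g ζ0).natDegree = 0 := by omega
      obtain ⟨γ', hγ'⟩ := natDegree_eq_zero.mp hdeg0
      refine ⟨ζ0 * e, γ', ?_⟩
      have h2 := hγ'
      rw [hg] at h2
      simp only at h2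
      linear_combination -h2
  · -- no bad factor: all degrees are a
    push_neg at hb
    have hall : (m.map fun ζ => (g ζ).natDegree) = Multiset.replicate d a := by
      apply Multiset.eq_replicate.mpr
      refine ⟨by rw [Multiset.card_map, hcard], ?_⟩
      intro b hb'
      obtain ⟨ζ, hζmem, rfl⟩ := Multiset.mem_map.mp hb'
      exact hdeg_eq ζ (hb ζ hζmem)
    rw [hFdeg, hall, Multiset.sum_replicate, smul_eq_mul]
    constructor
    · omega
    · intro heq
      omega
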